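/- For every fixed permutation σ of [m], the sum over all permutations τ of [m] of the Kendall tau (swap) distance between σ and τ equals m! · m(m−1)/4. Consequently, the swap isomorphic distance between the identity election ID (with m! identical votes) and the uniformity election UN (containing each of the m! possible votes once) over m candidates equals m! · m(m−1)/4. -/

import Mathlib

open Finset


/-- The Kendall tau (swap) distance between two votes (permutations of `Fin m`,
giving each candidate a position): the number of pairs of candidates ranked in
opposite order. -/
def kendallTau {m : ℕ} (σ τ : Equiv.Perm (Fin m)) : ℕ :=
  (Finset.univ.filter (fun p : Fin m × Fin m =>
    p.1 < p.2 ∧ ¬((σ p.1 < σ p.2) ↔ (τ p.1 < τ p.2)))).card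

/-- The swap isomorphic distance between two elections: minimum over candidate
bijections `π` and vote matchings `ρ` of the total Kendall tau distance of matched
votes. -/
noncomputable def swapElecDist {m n : ℕ} (X Y : Fin n → Equiv.Perm (Fin m)) : ℕ :=
  sInf {d : ℕ | ∃ (π : Equiv.Perm (Fin m)) (ρ : Equiv.Perm (Fin n)),
    d = ∑ i, kendallTau (π.symm.trans (X i)) (Y (ρ i))}

/-- For every fixed permutation `σ`, the sum over all permutations `τ` of the Kendall tau
distance between `σ` and `τ` equals `m! · m(m−1)/4`; consequently the swap isomorphic
distance between the identity election `ID` (with `m!` identical votes) and the uniformity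
election `UN` (containing every vote exactly once) equals `m! · m(m−1)/4`.
(Both equalities are stated multiplied by `4`.) -/
lemma count_pair {m : ℕ} (σ : Equiv.Perm (Fin m)) (a b : Fin m) (hab : a ≠ b) :
    2 * (univ.filter (fun τ : Equiv.Perm (Fin m) =>
        ¬((σ a < σ b) ↔ (τ a < τ b)))).card = Nat.factorial m := by
  have key : (univ.filter (fun τ : Equiv.Perm (Fin m) => ¬((σ a < σ b) ↔ (τ a < τ b)))).card
      = (univ.filter (fun τ : Equiv.Perm (Fin m) => ((σ a < σ b) ↔ (τ a < τ b)))).card := by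
    apply Finset.card_nbij' (fun τ => (Equiv.swap a b).trans τ) (fun τ => (Equiv.swap a b).trans τ)
    · intro τ hτ
      simp only [mem_coe, mem_filter, mem_univ, true_and] at hτ ⊢
      have h1 : ((Equiv.swap a b).trans τ) a = τ b := by simp
      have h2 : ((Equiv.swap a b).trans τ) b = τ a := by simp
      rw [h1, h2]
      have hne : τ a ≠ τ b := fun h => hab (τ.injective h)
      rcases hne.lt_or_gt with h | h <;> [have h' := asymm h; have h' := asymm h] <;> tauto
    · intro τ hτ
      simp only [mem_coe, mem_filter, mem_univ, true_and] at hτ ⊢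
      have h1 : ((Equiv.swap a b).trans τ) a = τ b := by simp
      have h2 : ((Equiv.swap a b).trans τ) b = τ a := by simp
      rw [h1, h2]
      have hne : τ a ≠ τ b := fun h => hab (τ.injective h)
      rcases hne.lt_or_gt with h | h <;> [have h' := asymm h; have h' := asymm h] <;> tauto
    · intro τ _; ext x; simp [Equiv.swap_apply_def]; split_ifs <;> simp_all
    · intro τ _; ext x; simp [Equiv.swap_apply_def]; split_ifs <;> simp_all
  have hsum := Finset.card_filter_add_card_filter_not
    (s := (univ : Finset (Equiv.Perm (Fin m))))
    (p := fun τ => ((σ a < σ b) ↔ (τ a < τ b)))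
  simp only [Finset.card_univ, Fintype.card_perm, Fintype.card_fin] at hsum
  omega

lemma sum_kendall {m : ℕ} (σ : Equiv.Perm (Fin m)) :
    4 * ∑ τ : Equiv.Perm (Fin m), kendallTau σ τ = Nat.factorial m * (m * (m - 1)) := by
  set P : Finset (Fin m × Fin m) := univ.filter (fun p => p.1 < p.2) with hP
  have hk : ∀ τ : Equiv.Perm (Fin m), kendallTau σ τ
      = ∑ p ∈ P, if ¬((σ p.1 < σ p.2) ↔ (τ p.1 < τ p.2)) then 1 else 0 := by
    intro τ
    rw [kendallTau, ← Finset.filter_filter, Finset.card_filter]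
  have hswap : ∑ τ : Equiv.Perm (Fin m), kendallTau σ τ
      = ∑ p ∈ P, (univ.filter (fun τ : Equiv.Perm (Fin m) =>
          ¬((σ p.1 < σ p.2) ↔ (τ p.1 < τ p.2)))).card := by
    simp only [hk]
    rw [Finset.sum_comm]
    congr 1; ext p
    rw [Finset.card_filter]
  have hPcard : 2 * P.card = m * (m - 1) := by
    have hQ : P.card = (univ.filter (fun p : Fin m × Fin m => p.2 < p.1)).card := by
      apply Finset.card_nbij' (fun p => (p.2, p.1)) (fun p => (p.2, p.1)) <;>
        simp +contextual [hP, Set.MapsTo, Set.LeftInvOn, Set.RightInvOn]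
    have hdisj : Disjoint P (univ.filter (fun p : Fin m × Fin m => p.2 < p.1)) := by
      rw [Finset.disjoint_filter]
      intro p _ h1 h2
      exact absurd h1 (not_lt_of_gt h2)
    have hunion : P ∪ univ.filter (fun p : Fin m × Fin m => p.2 < p.1)
        = (univ : Finset (Fin m)).offDiag := by
      ext p
      simp only [hP, mem_union, mem_filter, mem_univ, true_and, Finset.mem_offDiag]
      constructor
      · rintro (h | h)
        exacts [h.ne, h.ne']
      · exact fun h => lt_or_gt_of_ne h
    have hoff : ((univ : Finset (Fin m)).offDiag).card = m * m - m := by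
      rw [Finset.offDiag_card]; simp
    have := Finset.card_union_of_disjoint hdisj
    rw [hunion, hoff, ← hQ] at this
    have : 2 * P.card = m * m - m := by omega
    rw [this, Nat.mul_sub_one]
  have h2 : 2 * ∑ τ : Equiv.Perm (Fin m), kendallTau σ τ = P.card * Nat.factorial m := by
    rw [hswap, Finset.mul_sum]
    rw [Finset.sum_congr rfl (fun p hp => ?_), Finset.sum_const, smul_eq_mul]
    exact count_pair σ p.1 p.2 (by rw [hP] at hp; exact (mem_filter.mp hp).2.ne)
  calc 4 * ∑ τ : Equiv.Perm (Fin m), kendallTau σ τ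
      = 2 * (2 * ∑ τ : Equiv.Perm (Fin m), kendallTau σ τ) := by ring
    _ = 2 * (P.card * Nat.factorial m) := by rw [h2]
    _ = (2 * P.card) * Nat.factorial m := by ring
    _ = Nat.factorial m * (m * (m - 1)) := by rw [hPcard]; ring

theorem stmt1 (m : ℕ) :
    (∀ σ : Equiv.Perm (Fin m),
      4 * ∑ τ : Equiv.Perm (Fin m), kendallTau σ τ = Nat.factorial m * (m * (m - 1))) ∧
    (∀ U : Fin (Nat.factorial m) → Equiv.Perm (Fin m), Function.Bijective U →
      4 * swapElecDist (fun _ => (1 : Equiv.Perm (Fin m))) U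
        = Nat.factorial m * (m * (m - 1))) := by
  refine ⟨sum_kendall, ?_⟩
  intro U hU
  set d₀ := ∑ τ : Equiv.Perm (Fin m), kendallTau 1 τ with hd0
  have hval : ∀ (π : Equiv.Perm (Fin m)) (ρ : Equiv.Perm (Fin (Nat.factorial m))),
      (∑ i, kendallTau (π.symm.trans ((fun _ => (1 : Equiv.Perm (Fin m))) i)) (U (ρ i))) = d₀ := by
    intro π ρ
    have h1 : π.symm.trans (1 : Equiv.Perm (Fin m)) = π.symm := by
      rw [Equiv.Perm.one_def, Equiv.trans_refl]
    simp only [h1]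
    have hb : Function.Bijective (fun i => U (ρ i)) := hU.comp ρ.bijective
    have hre : (∑ i, kendallTau π.symm (U (ρ i)))
        = ∑ τ : Equiv.Perm (Fin m), kendallTau π.symm τ :=
      Fintype.sum_bijective _ hb
        (fun i => kendallTau π.symm (U (ρ i))) (fun τ => kendallTau π.symm τ) (fun _ => rfl)
    have h4 : 4 * (∑ τ : Equiv.Perm (Fin m), kendallTau π.symm τ) = 4 * d₀ := by
      rw [sum_kendall, hd0, sum_kendall]
    rw [hre]
    omega
  have hset : {d : ℕ | ∃ (π : Equiv.Perm (Fin m)) (ρ : Equiv.Perm (Fin (Nat.factorial m))),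
      d = ∑ i, kendallTau (π.symm.trans ((fun _ => (1 : Equiv.Perm (Fin m))) i)) (U (ρ i))}
      = {d₀} := by
    ext d
    simp only [Set.mem_setOf_eq, Set.mem_singleton_iff]
    constructor
    · rintro ⟨π, ρ, rfl⟩; exact hval π ρ
    · rintro rfl; exact ⟨1, 1, (hval 1 1).symm⟩
  simp only [swapElecDist]
  rw [hset, csInf_singleton]
  exact sum_kendall 1
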